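/- For n×n matrices A, B over a division ring F, the Dieudonné determinant is multiplicative: Det(A·B) = Det(A) · Det(B) in the abelianization of F×. -/

import Mathlib

open scoped Classical

/-- The class of `x ∈ F` in the abelianization of `Fˣ`, with `0` adjoined. -/
noncomputable def cls {F : Type} [DivisionRing F] (x : F) : WithZero (Abelianization Fˣ) :=
  if h : x = 0 then 0 else (Abelianization.of (Units.mk0 x h) : Abelianization Fˣ)


lemma cls_ne_zero {F : Type} [DivisionRing F] {l : F} (hl : l ≠ 0) : cls l ≠ 0 := by
  rw [cls, dif_neg hl]
  exact WithZero.coe_ne_zero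

lemma cls_one {F : Type} [DivisionRing F] : cls (1 : F) = 1 := by
  rw [cls, dif_neg (one_ne_zero : (1:F) ≠ 0)]
  have : Units.mk0 (1 : F) one_ne_zero = 1 := Units.ext rfl
  rw [this, map_one]
  rfl

namespace DieudonneAux

lemma updateRow_add_mul {F : Type} [DivisionRing F] {n : ℕ}
    (A C : Matrix (Fin n) (Fin n) F) (i j : Fin n) (l : F) :
    (A.updateRow i (A i + l • A j)) * C = (A * C).updateRow i ((A * C) i + l • (A * C) j) := by
  ext a b
  by_cases ha : a = i
  · subst ha
    simp [Matrix.mul_apply, Matrix.updateRow_self, Finset.sum_add_distrib, add_mul,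
      Finset.mul_sum, mul_assoc]
  · simp [Matrix.mul_apply, Matrix.updateRow_ne ha]

lemma updateRow_smul_mul {F : Type} [DivisionRing F] {n : ℕ}
    (A C : Matrix (Fin n) (Fin n) F) (i : Fin n) (l : F) :
    (A.updateRow i (l • A i)) * C = (A * C).updateRow i (l • (A * C) i) := by
  ext a b
  by_cases ha : a = i
  · subst ha
    simp [Matrix.mul_apply, Matrix.updateRow_self, Finset.mul_sum, mul_assoc]
  · simp [Matrix.mul_apply, Matrix.updateRow_ne ha]

end DieudonneAux

namespace DieudonneAux

variable {F : Type} [DivisionRing F] {n : ℕ}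

def Step (A B : Matrix (Fin n) (Fin n) F) : Prop :=
  (∃ i j : Fin n, ∃ l : F, i ≠ j ∧ B = A.updateRow i (A i + l • A j)) ∨
  (∃ i : Fin n, ∃ l : F, l ≠ 0 ∧ B = A.updateRow i (l • A i))

def Red (A B : Matrix (Fin n) (Fin n) F) : Prop := Relation.ReflTransGen Step A B

def lift0 (r : Fin (n + 1) → F) (X : Matrix (Fin n) (Fin n) F) :
    Matrix (Fin (n + 1)) (Fin (n + 1)) F :=
  fun a => Fin.cases r (fun i => Fin.cons 0 (X i)) a

@[simp] lemma lift0_zero (r : Fin (n+1) → F) (X : Matrix (Fin n) (Fin n) F) :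
    lift0 r X 0 = r := rfl

@[simp] lemma lift0_succ (r : Fin (n+1) → F) (X : Matrix (Fin n) (Fin n) F) (i : Fin n) :
    lift0 r X i.succ = Fin.cons 0 (X i) := rfl

lemma step_lift {X Y : Matrix (Fin n) (Fin n) F} (h : Step X Y) (r : Fin (n+1) → F) :
    Step (lift0 r X) (lift0 r Y) := by
  rcases h with ⟨i, j, l, hij, rfl⟩ | ⟨i, l, hl, rfl⟩
  · left
    refine ⟨i.succ, j.succ, l, by simpa using hij, ?_⟩
    ext a b
    refine Fin.cases ?_ (fun a' => ?_) a
    · rw [Matrix.updateRow_ne (Fin.succ_ne_zero i).symm]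
      rfl
    · by_cases ha : a' = i
      · subst ha
        rw [Matrix.updateRow_self]
        simp only [lift0_succ, Matrix.updateRow_self]
        refine Fin.cases ?_ (fun b' => ?_) b <;> simp
      · rw [Matrix.updateRow_ne (by simpa using ha)]
        simp only [lift0_succ, Matrix.updateRow_ne ha]
  · right
    refine ⟨i.succ, l, hl, ?_⟩
    ext a b
    refine Fin.cases ?_ (fun a' => ?_) a
    · rw [Matrix.updateRow_ne (Fin.succ_ne_zero i).symm]
      rfl
    · by_cases ha : a' = i
      · subst ha
        rw [Matrix.updateRow_self]
        simp only [lift0_succ, Matrix.updateRow_self]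
        refine Fin.cases ?_ (fun b' => ?_) b <;> simp
      · rw [Matrix.updateRow_ne (by simpa using ha)]
        simp only [lift0_succ, Matrix.updateRow_ne ha]

lemma red_lift {X Y : Matrix (Fin n) (Fin n) F} (h : Red X Y) (r : Fin (n+1) → F) :
    Red (lift0 r X) (lift0 r Y) :=
  Relation.ReflTransGen.lift (lift0 r) (fun _ _ hab => step_lift hab r) _ _ h



lemma red_refl {n : ℕ} (A : Matrix (Fin n) (Fin n) F) : Red A A := Relation.ReflTransGen.refl

lemma red_single {n : ℕ} {A B : Matrix (Fin n) (Fin n) F} (h : Step A B) : Red A B :=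
  Relation.ReflTransGen.single h

lemma red_trans {n : ℕ} {A B C : Matrix (Fin n) (Fin n) F} (h : Red A B) (h' : Red B C) :
    Red A C := Relation.ReflTransGen.trans h h'

/-- clear the column below a pivot 1 at (0,0) -/
lemma clearcol {n : ℕ} (M : Matrix (Fin (n+1)) (Fin (n+1)) F) (h00 : M 0 0 = 1) :
    ∃ N, Red M N ∧ N 0 = M 0 ∧ ∀ i : Fin n, N i.succ 0 = 0 := by
  have key : ∀ k : ℕ, k ≤ n →
      ∃ N, Red M N ∧ N 0 = M 0 ∧ ∀ i : Fin n, (i : ℕ) < k → N i.succ 0 = 0 := by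
    intro k hk
    induction k with
    | zero => exact ⟨M, red_refl M, rfl, fun i hi => absurd hi (by omega)⟩
    | succ k ih =>
      obtain ⟨N, hred, h0, hcol⟩ := ih (by omega)
      set i0 : Fin n := ⟨k, by omega⟩ with hi0
      refine ⟨N.updateRow i0.succ (N i0.succ + (-(N i0.succ 0)) • N 0), ?_, ?_, ?_⟩
      · exact red_trans hred (red_single (Or.inl ⟨i0.succ, 0, _, Fin.succ_ne_zero i0, rfl⟩))
      · rw [Matrix.updateRow_ne (Fin.succ_ne_zero i0).symm, h0]
      · intro i hi
        by_cases hii : i = i0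
        · subst hii
          rw [Matrix.updateRow_self]
          simp only [Pi.add_apply, Pi.smul_apply, smul_eq_mul]
          have : N 0 0 = 1 := by rw [h0, h00]
          rw [this, mul_one]
          simp
        · rw [Matrix.updateRow_ne (fun h => hii (Fin.succ_injective _ h))]
          apply hcol
          have : (i : ℕ) ≠ k := fun h => hii (Fin.ext h)
          omega
  obtain ⟨N, hred, h0, hcol⟩ := key n le_rfl
  exact ⟨N, hred, h0, fun i => hcol i i.isLt⟩

/-- clear the part of row 0 to the right, given all other rows are identity rows -/
lemma clearrow {n : ℕ} (Q : Matrix (Fin (n+1)) (Fin (n+1)) F)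
    (hQ : ∀ i : Fin n, Q i.succ = (1 : Matrix (Fin (n+1)) (Fin (n+1)) F) i.succ) :
    ∃ R, Red Q R ∧ R 0 0 = Q 0 0 ∧ (∀ j : Fin n, R 0 j.succ = 0) ∧
      ∀ i : Fin n, R i.succ = Q i.succ := by
  have key : ∀ k : ℕ, k ≤ n →
      ∃ R, Red Q R ∧ R 0 0 = Q 0 0 ∧ (∀ j : Fin n, (j : ℕ) < k → R 0 j.succ = 0) ∧
        ∀ i : Fin n, R i.succ = Q i.succ := by
    intro k hk
    induction k with
    | zero => exact ⟨Q, red_refl Q, rfl, fun j hj => absurd hj (by omega), fun _ => rfl⟩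
    | succ k ih =>
      obtain ⟨R, hred, h00, hrow, hrest⟩ := ih (by omega)
      set j0 : Fin n := ⟨k, by omega⟩ with hj0
      refine ⟨R.updateRow 0 (R 0 + (-(R 0 j0.succ)) • R j0.succ), ?_, ?_, ?_, ?_⟩
      · exact red_trans hred (red_single (Or.inl ⟨0, j0.succ, _, (Fin.succ_ne_zero j0).symm, rfl⟩))
      · rw [Matrix.updateRow_self]
        simp only [Pi.add_apply, Pi.smul_apply, smul_eq_mul]
        have : R j0.succ 0 = 0 := by
          rw [hrest, hQ, Matrix.one_apply_ne (Fin.succ_ne_zero j0)]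
        rw [this, mul_zero, add_zero, h00]
      · intro j hj
        rw [Matrix.updateRow_self]
        simp only [Pi.add_apply, Pi.smul_apply, smul_eq_mul]
        by_cases hjj : j = j0
        · rw [hjj]
          have h2 : R j0.succ j0.succ = 1 := by rw [hrest, hQ, Matrix.one_apply_eq]
          rw [h2, mul_one]
          simp
        · have h1 : R j0.succ j.succ = 0 := by
            rw [hrest, hQ, Matrix.one_apply_ne]
            exact fun h => hjj ((Fin.succ_injective _ h).symm)
          rw [h1, mul_zero, add_zero]
          apply hrow
          have : (j : ℕ) ≠ k := fun h => hjj (Fin.ext h)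
          omega
      · intro i
        rw [Matrix.updateRow_ne (Fin.succ_ne_zero i), hrest]
  obtain ⟨R, hred, h1, h2, h3⟩ := key n le_rfl
  exact ⟨R, hred, h1, fun j => h2 j j.isLt, h3⟩


theorem elim : ∀ (n : ℕ) (M : Matrix (Fin n) (Fin n) F),
    ∃ N, Red M N ∧ (N = 1 ∨ ∃ i, N i = 0) := by
  intro n
  induction n with
  | zero =>
    intro M
    refine ⟨1, ?_, Or.inl rfl⟩
    have : M = 1 := by ext i; exact i.elim0
    rw [this]
    exact red_refl 1
  | succ n IH =>
    intro M
    -- Stage 1: obtain N reduced from M with zero first column below row 0,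
    -- and N 0 0 ∈ {0, 1}.
    obtain ⟨N, hredMN, hcol, h00⟩ :
        ∃ N, Red M N ∧ (∀ i : Fin n, N i.succ 0 = 0) ∧ (N 0 0 = 1 ∨ N 0 0 = 0) := by
      by_cases hc : ∀ i : Fin (n+1), M i 0 = 0
      · exact ⟨M, red_refl M, fun i => hc i.succ, Or.inr (hc 0)⟩
      · push_neg at hc
        obtain ⟨i, hi⟩ := hc
        -- make (0,0) entry nonzero
        obtain ⟨M₁, hred1, h1⟩ : ∃ M₁, Red M M₁ ∧ M₁ 0 0 ≠ 0 := by
          by_cases h0 : M 0 0 ≠ 0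
          · exact ⟨M, red_refl M, h0⟩
          · have hi0 : i ≠ 0 := by rintro rfl; exact h0 hi
            refine ⟨M.updateRow 0 (M 0 + (1 : F) • M i), ?_, ?_⟩
            · exact red_single (Or.inl ⟨0, i, 1, Ne.symm hi0, rfl⟩)
            · rw [Matrix.updateRow_self]
              simp only [Pi.add_apply, Pi.smul_apply, smul_eq_mul, one_mul]
              push_neg at h0
              rw [h0, zero_add]
              exact hi
        -- scale row 0 to make the entry 1
        set M₂ := M₁.updateRow 0 ((M₁ 0 0)⁻¹ • M₁ 0) with hM₂
        have hred2 : Red M M₂ :=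
          red_trans hred1 (red_single (Or.inr ⟨0, (M₁ 0 0)⁻¹, inv_ne_zero h1, rfl⟩))
        have h2 : M₂ 0 0 = 1 := by
          rw [hM₂, Matrix.updateRow_self]
          simp only [Pi.smul_apply, smul_eq_mul]
          exact inv_mul_cancel₀ h1
        obtain ⟨N, hred3, hN0, hNcol⟩ := clearcol M₂ h2
        refine ⟨N, red_trans hred2 hred3, hNcol, Or.inl ?_⟩
        rw [hN0, h2]
    -- Stage 2: N = lift0 (N 0) N' for the submatrix N'
    set N' : Matrix (Fin n) (Fin n) F := fun i j => N i.succ j.succ with hN'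
    have hNlift : N = lift0 (N 0) N' := by
      ext a b
      refine Fin.cases ?_ (fun a' => ?_) a
      · rfl
      · refine Fin.cases ?_ (fun b' => ?_) b
        · rw [lift0_succ, Fin.cons_zero, hcol]
        · rw [lift0_succ, Fin.cons_succ]
    obtain ⟨K, hredK, hK⟩ := IH N'
    have hredNK : Red N (lift0 (N 0) K) := by
      rw [hNlift]; exact red_lift hredK (N 0)
    rcases hK with rfl | ⟨i, hKi⟩
    · -- K = 1 : clear the rest of row 0
      set Q := lift0 (N 0) (1 : Matrix (Fin n) (Fin n) F) with hQdef
      have hQ : ∀ i : Fin n, Q i.succ = (1 : Matrix (Fin (n+1)) (Fin (n+1)) F) i.succ := by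
        intro i
        funext b
        refine Fin.cases ?_ (fun b' => ?_) b
        · rw [hQdef, lift0_succ, Fin.cons_zero, Matrix.one_apply_ne (Fin.succ_ne_zero i)]
        · rw [hQdef, lift0_succ, Fin.cons_succ]
          simp [Matrix.one_apply, Fin.succ_inj]
      obtain ⟨R, hredR, hR00, hRrow, hRrest⟩ := clearrow Q hQ
      have hredMR : Red M R := red_trans hredMN (red_trans hredNK hredR)
      rcases h00 with h1 | h0
      · -- pivot case : R = 1
        refine ⟨R, hredMR, Or.inl ?_⟩
        ext a b
        refine Fin.cases ?_ (fun a' => ?_) a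
        · refine Fin.cases ?_ (fun b' => ?_) b
          · rw [hR00, hQdef, lift0_zero, h1, Matrix.one_apply_eq]
          · rw [hRrow, Matrix.one_apply_ne (Fin.succ_ne_zero b').symm]
        · rw [hRrest, hQ]
      · -- degenerate case : row 0 of R is zero
        refine ⟨R, hredMR, Or.inr ⟨0, ?_⟩⟩
        funext b
        refine Fin.cases ?_ (fun b' => ?_) b
        · rw [hR00, hQdef, lift0_zero, h0]; rfl
        · rw [hRrow]; rfl
    · -- K has a zero row; then so does lift0 (N 0) K
      refine ⟨lift0 (N 0) K, red_trans hredMN hredNK, Or.inr ⟨i.succ, ?_⟩⟩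
      funext b
      refine Fin.cases ?_ (fun b' => ?_) b
      · rw [lift0_succ, Fin.cons_zero]; rfl
      · rw [lift0_succ, Fin.cons_succ, hKi]; rfl

end DieudonneAux

set_option maxHeartbeats 1000000 in
theorem dieudonne_det_multiplicative {F : Type} [DivisionRing F] (n : ℕ)
    (Det : Matrix (Fin n) (Fin n) F → WithZero (Abelianization Fˣ))
    (hsing : ∀ A, Det A = 0 ↔ ¬ IsUnit A)
    (hdiag : ∀ d : Fin n → F, Det (Matrix.diagonal d) = cls ((List.ofFn d).prod))
    (hrowadd : ∀ (A : Matrix (Fin n) (Fin n) F) (i j : Fin n), i ≠ j → ∀ l : F,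
      Det (A.updateRow i (A i + l • A j)) = Det A)
    (hrowsmul : ∀ (A : Matrix (Fin n) (Fin n) F) (i : Fin n) (l : F),
      Det (A.updateRow i (l • A i)) = cls l * Det A) :
    ∀ A B : Matrix (Fin n) (Fin n) F, Det (A * B) = Det A * Det B := by
  classical
  -- Det of the identity is 1
  have det_one : Det 1 = 1 := by
    rw [← Matrix.diagonal_one, hdiag]
    have h1 : (List.ofFn fun _ : Fin n => (1 : F)).prod = 1 := by simp
    rw [h1, cls_one]
  -- Det of a matrix with a zero row is 0
  have det_zero_row : ∀ (N : Matrix (Fin n) (Fin n) F) (i : Fin n), N i = 0 → Det N = 0 := by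
    intro N i h
    rw [hsing]
    rintro ⟨u, rfl⟩
    have h2 := congrFun (congrFun u.mul_inv i) i
    rw [Matrix.mul_apply, Matrix.one_apply_eq] at h2
    have h3 : ∀ j, u.val i j = (0 : F) := by
      intro j
      rw [congrFun h j]
      rfl
    simp only [h3, zero_mul, Finset.sum_const_zero] at h2
    exact one_ne_zero h2.symm
  -- one-step transfer
  have key : ∀ A A' : Matrix (Fin n) (Fin n) F, DieudonneAux.Step A A' →
      ∀ C : Matrix (Fin n) (Fin n) F,
        (Det (A' * C) = Det A' * Det C) → Det (A * C) = Det A * Det C := by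
    rintro A A' (⟨i, j, l, hij, rfl⟩ | ⟨i, l, hl, rfl⟩) C h
    · rw [DieudonneAux.updateRow_add_mul, hrowadd _ i j hij, hrowadd _ i j hij] at h
      exact h
    · rw [DieudonneAux.updateRow_smul_mul, hrowsmul, hrowsmul] at h
      rw [mul_assoc] at h
      exact mul_left_cancel₀ (cls_ne_zero hl) h
  -- transfer along reductions
  have red_key : ∀ A A' : Matrix (Fin n) (Fin n) F, DieudonneAux.Red A A' →
      ∀ C : Matrix (Fin n) (Fin n) F,
        (Det (A' * C) = Det A' * Det C) → Det (A * C) = Det A * Det C := by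
    intro A A' h
    induction h with
    | refl => exact fun C h => h
    | tail _ hbc ih => exact fun C h => ih C (key _ _ hbc C h)
  intro A B
  obtain ⟨N, hred, hN⟩ := DieudonneAux.elim n A
  refine red_key A N hred B ?_
  rcases hN with rfl | ⟨i, hNi⟩
  · rw [one_mul, det_one, one_mul]
  · have h3 : ∀ j, N i j = 0 := fun j => congrFun hNi j
    have hNB : (N * B) i = 0 := by
      funext b
      simp [Matrix.mul_apply, h3]
    rw [det_zero_row _ i hNi, det_zero_row _ i hNB, zero_mul]
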